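/- Let D ⊂ ℝ^d be open bounded and let W : D × ℝ^{m×d} → [0,∞) be measurable in x and convex in ξ, with x ↦ sup_{|ζ| ≤ r} W(x,ζ) ∈ L¹(D) for all r > 0 and x ↦ sup_{|ζ| ≤ r} W*(x,ζ) ∈ L¹(D) for all r > 0. Let g ∈ W^{1,∞}(ℝ^d)^m. Then there exists a constant c such that for every u ∈ g + W₀^{1,1}(D)^m one has ∫_D W(x, ∇u) dx − ∫_D |f| |u| dx ≥ ½ ∫_D W(x, ∇u) dx − c for every f ∈ L^d(D)^m with ‖f‖_{L^d} bounded by a fixed constant; in particular the functional u ↦ ∫_D W(x,∇u) dx − ∫_D f·u dx is bounded below and coercive (has W^{1,1}-weakly relatively compact sublevels) on g + W₀^{1,1}(D)^m. -/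

import Mathlib

open Set Filter MeasureTheory
open scoped Topology

noncomputable section

/-- The Frobenius (Euclidean) pairing of two linear maps `ℝ^d → ℝ^m`. -/
def mpair {d m : ℕ}
    (η ζ : EuclideanSpace ℝ (Fin d) →L[ℝ] EuclideanSpace ℝ (Fin m)) : ℝ :=
  ∑ i : Fin d, (inner ℝ (η (EuclideanSpace.single i (1:ℝ)))
    (ζ (EuclideanSpace.single i (1:ℝ))) : ℝ)

open scoped ENNReal NNReal

namespace Stmt16Aux

lemma sum_single_eq {d : ℕ} (x : EuclideanSpace ℝ (Fin d)) :
    ∑ i : Fin d, x i • EuclideanSpace.single i (1:ℝ) = x := by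
  ext j
  have : (∑ i : Fin d, x i • EuclideanSpace.single i (1:ℝ)) j
      = ∑ i : Fin d, (x i • EuclideanSpace.single i (1:ℝ)) j := by
    rw [WithLp.ofLp_sum]; exact Finset.sum_apply j Finset.univ _
  rw [this]
  simp [EuclideanSpace.single_apply]

lemma opNorm_le_frob {d m : ℕ} (ζ : EuclideanSpace ℝ (Fin d) →L[ℝ] EuclideanSpace ℝ (Fin m)) :
    ‖ζ‖ ≤ Real.sqrt (∑ i : Fin d, ‖ζ (EuclideanSpace.single i (1:ℝ))‖^2) := by
  refine ContinuousLinearMap.opNorm_le_bound _ (Real.sqrt_nonneg _) fun x => ?_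
  have hx : ζ x = ∑ i : Fin d, x i • ζ (EuclideanSpace.single i (1:ℝ)) := by
    conv_lhs => rw [← sum_single_eq x]
    rw [map_sum]
    simp
  rw [hx]
  calc ‖∑ i : Fin d, x i • ζ (EuclideanSpace.single i (1:ℝ))‖
      ≤ ∑ i : Fin d, |x i| * ‖ζ (EuclideanSpace.single i (1:ℝ))‖ := by
        refine (norm_sum_le _ _).trans ?_
        simp [norm_smul]
    _ ≤ Real.sqrt (∑ i : Fin d, ‖ζ (EuclideanSpace.single i (1:ℝ))‖^2) * ‖x‖ := by
        have h := Finset.sum_mul_sq_le_sq_mul_sq Finset.univ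
          (fun i : Fin d => |x i|) (fun i => ‖ζ (EuclideanSpace.single i (1:ℝ))‖)
        have hnn : (0:ℝ) ≤ ∑ i : Fin d, |x i| * ‖ζ (EuclideanSpace.single i (1:ℝ))‖ :=
          Finset.sum_nonneg fun i _ => mul_nonneg (abs_nonneg _) (norm_nonneg _)
        rw [← Real.sqrt_sq hnn]
        have := Real.sqrt_le_sqrt h
        refine this.trans ?_
        rw [Real.sqrt_mul (by positivity)]
        rw [mul_comm]
        gcongr
        rw [EuclideanSpace.norm_eq]
        refine le_of_eq ?_
        congr 1

lemma mpair_smul_self {d m : ℕ} (t : ℝ)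
    (ζ : EuclideanSpace ℝ (Fin d) →L[ℝ] EuclideanSpace ℝ (Fin m)) :
    mpair (t • ζ) ζ = t * ∑ i : Fin d, ‖ζ (EuclideanSpace.single i (1:ℝ))‖^2 := by
  unfold mpair
  rw [Finset.mul_sum]
  refine Finset.sum_congr rfl fun i _ => ?_
  rw [ContinuousLinearMap.smul_apply, real_inner_smul_left, real_inner_self_eq_norm_sq]

lemma superlin_pointwise {d m : ℕ} {C : ℝ} (hC : 0 < C)
    {Wx : (EuclideanSpace ℝ (Fin d) →L[ℝ] EuclideanSpace ℝ (Fin m)) → ℝ} {Sx : ℝ}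
    (h : ∀ η ζ, ‖η‖ ≤ C → mpair η ζ - Wx ζ ≤ Sx) :
    ∀ ζ, C * ‖ζ‖ ≤ Wx ζ + Sx := by
  intro ζ
  by_cases hz : ζ = 0
  · subst hz
    have h0 := h 0 0 (by simp [hC.le])
    have hm0 : mpair (0 : EuclideanSpace ℝ (Fin d) →L[ℝ] EuclideanSpace ℝ (Fin m)) 0 = 0 := by
      simp [mpair]
    rw [hm0] at h0
    simp only [norm_zero, mul_zero]
    linarith
  · set Q := ∑ i : Fin d, ‖ζ (EuclideanSpace.single i (1:ℝ))‖^2 with hQ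
    have hQ0 : 0 ≤ Q := Finset.sum_nonneg fun i _ => sq_nonneg _
    have hfrob := opNorm_le_frob ζ
    have hζ0 : 0 < ‖ζ‖ := norm_pos_iff.mpr hz
    have hsq : 0 < Real.sqrt Q := lt_of_lt_of_le hζ0 hfrob
    set t := C / Real.sqrt Q with ht
    have ht0 : 0 < t := div_pos hC hsq
    have hsqQ : Real.sqrt Q * Real.sqrt Q = Q := Real.mul_self_sqrt hQ0
    have hηnorm : ‖t • ζ‖ ≤ C := by
      rw [norm_smul t ζ, Real.norm_eq_abs, abs_of_pos ht0, ht, div_mul_eq_mul_div,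
        div_le_iff₀ hsq]
      nlinarith
    have hm := h (t • ζ) ζ hηnorm
    rw [mpair_smul_self] at hm
    have h1 : t * Q = C * Real.sqrt Q := by
      rw [ht]
      field_simp
      nlinarith [hsqQ]
    have h2 : C * ‖ζ‖ ≤ C * Real.sqrt Q := by nlinarith
    rw [← hQ] at hm
    linarith

def e1 : ℝ ≃ₗᵢ[ℝ] EuclideanSpace ℝ (Fin 1) :=
{ toLinearEquiv :=
  { toFun := fun t => EuclideanSpace.single 0 t
    map_add' := by
      intro a b; ext j
      by_cases hj : j = (0 : Fin 1) <;> simp [EuclideanSpace.single_apply, hj]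
    map_smul' := by
      intro c a; ext j
      by_cases hj : j = (0 : Fin 1) <;> simp [EuclideanSpace.single_apply, hj]
    invFun := fun x => x 0
    left_inv := fun t => by simp
    right_inv := fun x => by ext j; fin_cases j; simp },
  norm_map' := fun t => by simp }

lemma sobolev_one {F : Type*} [NormedAddCommGroup F] [NormedSpace ℝ F] [CompleteSpace F]
    (φ : EuclideanSpace ℝ (Fin 1) → F) (hφ : ContDiff ℝ 1 φ) (hc : HasCompactSupport φ) :
    eLpNorm φ ⊤ volume ≤ ∫⁻ x, ‖fderiv ℝ φ x‖₊ := by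
  set h : ℝ → F := φ ∘ e1 with hh_def
  have hhc : ContDiff ℝ 1 h := hφ.comp (e1.toContinuousLinearEquiv.toContinuousLinearMap.contDiff)
  have hhcs : HasCompactSupport h := hc.comp_homeomorph e1.toHomeomorph
  have hderiv : ∀ t, ‖deriv h t‖ ≤ ‖fderiv ℝ φ (e1 t)‖ := by
    intro t
    have h1 : HasFDerivAt h ((fderiv ℝ φ (e1 t)).comp
        (e1.toContinuousLinearEquiv.toContinuousLinearMap)) t := by
      have := ((hφ.differentiable one_ne_zero) (e1 t)).hasFDerivAt
      exact this.comp t (e1.toContinuousLinearEquiv.toContinuousLinearMap.hasFDerivAt)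
    have h2 : deriv h t = (fderiv ℝ φ (e1 t)) (e1 1) := by
      have := h1.hasDerivAt.deriv
      rw [this]; rfl
    rw [h2]
    calc ‖(fderiv ℝ φ (e1 t)) (e1 1)‖ ≤ ‖fderiv ℝ φ (e1 t)‖ * ‖e1 (1:ℝ)‖ :=
      (fderiv ℝ φ (e1 t)).le_opNorm _
    _ = ‖fderiv ℝ φ (e1 t)‖ := by rw [e1.norm_map]; simp
  have hdint : Integrable (fun t => ‖deriv h t‖) volume :=
    ((hhc.continuous_deriv le_rfl).integrable_of_hasCompactSupport hhcs.deriv).norm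
  have hfint : Integrable (fun x => ‖fderiv ℝ φ x‖) volume :=
    ((hφ.continuous_fderiv one_ne_zero).integrable_of_hasCompactSupport (hc.fderiv (𝕜 := ℝ))).norm
  have key : ∀ t : ℝ, ‖h t‖ ≤ ∫ x, ‖fderiv ℝ φ x‖ := by
    intro t
    obtain ⟨R, hR, hR0⟩ := hhcs.exists_pos_le_norm
    set a : ℝ := -(R + |t|) with ha_def
    have hat : a ≤ t := by
      have := abs_nonneg t; have := neg_abs_le t; nlinarith
    have hha : h a = 0 := by
      apply hR0
      rw [Real.norm_eq_abs, ha_def, abs_neg, abs_of_pos (by positivity)]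
      nlinarith [abs_nonneg t]
    have hftc : ∫ s in a..t, deriv h s = h t - h a := by
      apply intervalIntegral.integral_deriv_eq_sub
      · intro x _; exact (hhc.differentiable one_ne_zero) x
      · exact ((hhc.continuous_deriv le_rfl)).intervalIntegrable _ _
    have : ‖h t‖ = ‖∫ s in a..t, deriv h s‖ := by rw [hftc, hha, sub_zero]
    rw [this]
    calc ‖∫ s in a..t, deriv h s‖ ≤ ∫ s in a..t, ‖deriv h s‖ :=
          intervalIntegral.norm_integral_le_integral_norm hat
      _ = ∫ s in Set.Ioc a t, ‖deriv h s‖ := by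
          rw [intervalIntegral.integral_of_le hat]
      _ ≤ ∫ s, ‖deriv h s‖ := by
          apply setIntegral_le_integral hdint
          filter_upwards with s using norm_nonneg _
      _ ≤ ∫ s, ‖fderiv ℝ φ (e1 s)‖ := by
          apply integral_mono hdint _ hderiv
          exact (e1.measurePreserving.integrable_comp_emb
            e1.toHomeomorph.measurableEmbedding).mpr hfint
      _ = ∫ x, ‖fderiv ℝ φ x‖ := by
          exact e1.measurePreserving.integral_comp e1.toHomeomorph.measurableEmbedding
            (fun y => ‖fderiv ℝ φ y‖)
  rw [eLpNorm_exponent_top]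
  refine essSup_le_of_ae_le _ (Filter.Eventually.of_forall fun x => ?_)
  have hx : ‖φ x‖ ≤ ∫ y, ‖fderiv ℝ φ y‖ := by
    have := key (e1.symm x)
    simpa [hh_def] using this
  calc (‖φ x‖₊ : ℝ≥0∞) = ENNReal.ofReal ‖φ x‖ := (ofReal_norm _).symm
    _ ≤ ENNReal.ofReal (∫ y, ‖fderiv ℝ φ y‖) := ENNReal.ofReal_le_ofReal hx
    _ = ∫⁻ y, ‖fderiv ℝ φ y‖₊ := by
        rw [MeasureTheory.ofReal_integral_eq_lintegral_ofReal hfint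
          (Filter.Eventually.of_forall fun y => norm_nonneg _)]
        congr 1; ext y; rw [ofReal_norm, enorm_eq_nnnorm]

def pexp (d : ℕ) : ℝ≥0∞ := if d = 1 then ⊤ else ((d:ℝ≥0).conjExponent : ℝ≥0∞)

lemma pexp_one_le {d : ℕ} (hd : 1 ≤ d) : 1 ≤ pexp d := by
  unfold pexp
  split
  · exact le_top
  · rename_i hd1
    have h1 : (1:ℝ≥0) < (d:ℝ≥0) := by exact_mod_cast (by omega : 1 < d)
    have := (NNReal.HolderConjugate.conjExponent h1).symm.lt
    exact_mod_cast this.le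

lemma sobolev_const (d m : ℕ) (hd : 1 ≤ d) : ∃ K : ℝ≥0∞, K ≠ ⊤ ∧
    ∀ φ : EuclideanSpace ℝ (Fin d) → EuclideanSpace ℝ (Fin m),
      ContDiff ℝ 1 φ → HasCompactSupport φ →
      eLpNorm φ (pexp d) volume ≤ K * ∫⁻ x, ‖fderiv ℝ φ x‖₊ := by
  by_cases hd1 : d = 1
  · subst hd1
    exact ⟨1, ENNReal.one_ne_top, fun φ h1 h2 => by
      simpa [pexp] using sobolev_one φ h1 h2⟩
  · set p : ℝ≥0 := (d:ℝ≥0).conjExponent with hp_def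
    refine ⟨((eLpNormLESNormFDerivOneConst
      (volume : Measure (EuclideanSpace ℝ (Fin d))) p : ℝ≥0) : ℝ≥0∞),
      ENNReal.coe_ne_top, fun φ h1 h2 => ?_⟩
    have hp : ((Module.finrank ℝ (EuclideanSpace ℝ (Fin d)) : ℝ≥0)).HolderConjugate p := by
      rw [finrank_euclideanSpace_fin]
      exact NNReal.HolderConjugate.conjExponent (by exact_mod_cast (by omega : 1 < d))
    have := eLpNorm_le_eLpNorm_fderiv_one volume h1 h2 hp
    rw [eLpNorm_one_eq_lintegral_enorm] at this
    rw [pexp, if_neg hd1]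
    exact this

lemma pairing_bound (d : ℕ) (hd : 1 ≤ d) {α β γ : Type*} [MeasurableSpace α]
    [NormedAddCommGroup β] [NormedAddCommGroup γ] (ν : Measure α)
    (f : α → β) (u : α → γ) (hu : AEStronglyMeasurable u ν)
    (h : α → ℝ) (hh : AEStronglyMeasurable h ν) (hh0 : ∀ x, 0 ≤ h x)
    (hhle : ∀ x, h x ≤ ‖f x‖ * ‖u x‖) :
    ∫⁻ x, ENNReal.ofReal (h x) ∂ν ≤ eLpNorm f d ν * eLpNorm u (pexp d) ν := by
  set F : α → ℝ≥0∞ := fun x => ENNReal.ofReal (h x) / ‖u x‖₊ with hF_def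
  have hFmeas : AEMeasurable F ν :=
    (ENNReal.measurable_ofReal.comp_aemeasurable hh.aemeasurable).div hu.enorm
  have hzero : ∀ x, ‖u x‖₊ = 0 → ENNReal.ofReal (h x) = 0 := by
    intro x hx
    have : h x ≤ 0 := by
      have := hhle x
      have hnx : ‖u x‖ = 0 := by simpa using congrArg NNReal.toReal hx
      simpa [hnx] using this
    simp [ENNReal.ofReal_eq_zero.mpr this]
  have hFle : ∀ x, F x ≤ ‖f x‖₊ := by
    intro x
    by_cases hx : ‖u x‖₊ = 0
    · simp [hF_def, hzero x hx]
    · have hne : (‖u x‖₊ : ℝ≥0∞) ≠ 0 := by exact_mod_cast hx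
      rw [hF_def]
      rw [ENNReal.div_le_iff hne ENNReal.coe_ne_top]
      calc ENNReal.ofReal (h x) ≤ ENNReal.ofReal (‖f x‖ * ‖u x‖) :=
            ENNReal.ofReal_le_ofReal (hhle x)
        _ = (‖f x‖₊ : ℝ≥0∞) * ‖u x‖₊ := by
            rw [ENNReal.ofReal_mul (norm_nonneg _), ofReal_norm,
              ofReal_norm, enorm_eq_nnnorm, enorm_eq_nnnorm]
  have hmain : ∀ x, ENNReal.ofReal (h x) ≤ F x * ‖u x‖₊ := by
    intro x
    by_cases hx : ‖u x‖₊ = 0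
    · simp [hzero x hx]
    · have hne : (‖u x‖₊ : ℝ≥0∞) ≠ 0 := by exact_mod_cast hx
      rw [hF_def, ENNReal.div_mul_cancel hne ENNReal.coe_ne_top]
  calc ∫⁻ x, ENNReal.ofReal (h x) ∂ν ≤ ∫⁻ x, F x * ‖u x‖₊ ∂ν := lintegral_mono hmain
    _ ≤ eLpNorm f d ν * eLpNorm u (pexp d) ν := by
      by_cases hd1 : d = 1
      · subst hd1
        have hae : ∀ᵐ x ∂ν, F x * ‖u x‖₊ ≤ F x * eLpNormEssSup u ν := by
          filter_upwards [ae_le_eLpNormEssSup (f := u) (μ := ν)] with x hx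
          exact mul_le_mul_right hx _
        calc ∫⁻ x, F x * ‖u x‖₊ ∂ν ≤ ∫⁻ x, F x * eLpNormEssSup u ν ∂ν := lintegral_mono_ae hae
          _ = (∫⁻ x, F x ∂ν) * eLpNormEssSup u ν := lintegral_mul_const'' _ hFmeas
          _ ≤ (∫⁻ x, (‖f x‖₊ : ℝ≥0∞) ∂ν) * eLpNormEssSup u ν :=
              mul_le_mul_left (lintegral_mono hFle) _
          _ = eLpNorm f (1:ℕ) ν * eLpNorm u (pexp 1) ν := by
              simp [pexp, eLpNorm_exponent_top, eLpNorm_one_eq_lintegral_enorm]; rfl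
      · have hd2 : 2 ≤ d := by omega
        have h1 : (1:ℝ) < (d:ℝ) := by exact_mod_cast (by omega : 1 < d)
        have hpq : (d:ℝ).HolderConjugate ((d:ℝ).conjExponent) :=
          Real.HolderConjugate.conjExponent h1
        have hdnn : (1:ℝ≥0) ≤ (d:ℝ≥0) := by exact_mod_cast hd
        have hq : (d:ℝ).conjExponent = (pexp d).toReal := by
          rw [pexp, if_neg hd1, ENNReal.coe_toReal, Real.conjExponent, NNReal.conjExponent]
          rw [NNReal.coe_div, NNReal.coe_sub hdnn]
          norm_num
        have hp0 : (pexp d) ≠ 0 := by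
          intro hcon
          have := pexp_one_le hd
          rw [hcon] at this
          exact (by norm_num : ¬ ((1:ℝ≥0∞) ≤ 0)) this
        have hptop : (pexp d) ≠ ⊤ := by rw [pexp, if_neg hd1]; exact ENNReal.coe_ne_top
        have hd0 : ((d:ℕ) : ℝ≥0∞) ≠ 0 := by exact_mod_cast (by omega : d ≠ 0)
        have hdtop : ((d:ℕ) : ℝ≥0∞) ≠ ⊤ := ENNReal.natCast_ne_top d
        calc ∫⁻ x, F x * ‖u x‖₊ ∂ν
            = ∫⁻ x, (F * fun x => (‖u x‖₊ : ℝ≥0∞)) x ∂ν := rfl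
          _ ≤ (∫⁻ x, F x ^ (d:ℝ) ∂ν) ^ (1/(d:ℝ)) *
              (∫⁻ x, (‖u x‖₊ : ℝ≥0∞) ^ ((d:ℝ).conjExponent) ∂ν) ^ (1/((d:ℝ).conjExponent)) :=
            ENNReal.lintegral_mul_le_Lp_mul_Lq ν hpq hFmeas hu.enorm
          _ ≤ eLpNorm f d ν * eLpNorm u (pexp d) ν := by
            rw [eLpNorm_eq_lintegral_rpow_enorm_toReal hd0 hdtop,
              eLpNorm_eq_lintegral_rpow_enorm_toReal hp0 hptop]
            rw [show ((d:ℕ):ℝ≥0∞).toReal = (d:ℝ) from by simp, ← hq]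
            gcongr
            exact hFle _
            exact one_div_nonneg.mpr (hq ▸ ENNReal.toReal_nonneg)
            exact hq ▸ ENNReal.toReal_nonneg
            exact (enorm_eq_nnnorm (u _)).ge

end Stmt16Aux
section
open Stmt16Aux

set_option maxHeartbeats 1600000 in
theorem stmt16 (d m : ℕ) (hd : 1 ≤ d)
    (D : Set (EuclideanSpace ℝ (Fin d))) (hDo : IsOpen D) (hDb : Bornology.IsBounded D)
    (W : EuclideanSpace ℝ (Fin d) →
      (EuclideanSpace ℝ (Fin d) →L[ℝ] EuclideanSpace ℝ (Fin m)) → ℝ)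
    (h0 : ∀ x ξ, 0 ≤ W x ξ) (hconv : ∀ x, ConvexOn ℝ univ (W x))
    (hWb : ∀ r : ℝ, 0 < r → ∃ S, IntegrableOn S D volume ∧
      ∀ᵐ x ∂(volume.restrict D), ∀ ζ, ‖ζ‖ ≤ r → W x ζ ≤ S x)
    (hWconj : ∀ r : ℝ, 0 < r → ∃ S, IntegrableOn S D volume ∧
      ∀ᵐ x ∂(volume.restrict D), ∀ η ζ, ‖η‖ ≤ r → mpair η ζ - W x ζ ≤ S x)
    (g : EuclideanSpace ℝ (Fin d) → EuclideanSpace ℝ (Fin m))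
    (Lg : NNReal) (hg : LipschitzWith Lg g)
    (dg : EuclideanSpace ℝ (Fin d) →
      (EuclideanSpace ℝ (Fin d) →L[ℝ] EuclideanSpace ℝ (Fin m)))
    (hdg : ∀ᵐ x ∂volume, HasFDerivAt g (dg x) x)
    (M : ℝ) (hM : 0 ≤ M) :
    ∃ c : ℝ,
      ∀ (f u : EuclideanSpace ℝ (Fin d) → EuclideanSpace ℝ (Fin m))
        (du : EuclideanSpace ℝ (Fin d) →
          (EuclideanSpace ℝ (Fin d) →L[ℝ] EuclideanSpace ℝ (Fin m))),
        eLpNorm f d (volume.restrict D) ≤ ENNReal.ofReal M →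
        (∀ᵐ x ∂volume, HasFDerivAt u (du x) x) →
        -- u ∈ g + W₀^{1,1}(D): approximation in W^{1,1} by g + C¹ compactly supported maps
        (∃ φ : ℕ → EuclideanSpace ℝ (Fin d) → EuclideanSpace ℝ (Fin m),
          (∀ k, ContDiff ℝ 1 (φ k) ∧ HasCompactSupport (φ k) ∧ tsupport (φ k) ⊆ D) ∧
          Tendsto (fun k => ∫ x in D,
              (‖g x + φ k x - u x‖ + ‖dg x + fderiv ℝ (φ k) x - du x‖)) atTop (𝓝 0)) →
        IntegrableOn u D volume → IntegrableOn du D volume →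
        IntegrableOn (fun x => W x (du x)) D volume →
        ((∫ x in D, W x (du x)) - (∫ x in D, ‖f x‖ * ‖u x‖) ≥
            (1 / 2) * (∫ x in D, W x (du x)) - c) ∧
        ((∫ x in D, W x (du x)) - (∫ x in D, (inner ℝ (f x) (u x) : ℝ)) ≥ -c) := by
  classical
  have hDmeas : MeasurableSet D := hDo.measurableSet
  set ν : Measure (EuclideanSpace ℝ (Fin d)) := volume.restrict D with hν
  haveI : IsFiniteMeasure ν := ⟨by
    rw [hν, Measure.restrict_apply_univ]; exact hDb.measure_lt_top⟩
  obtain ⟨K, hKtop, hK⟩ := sobolev_const d m hd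
  set K' := K.toReal with hK'def
  have hK'0 : 0 ≤ K' := ENNReal.toReal_nonneg
  set C : ℝ := 2*(M+1)*(K'+1) with hCdef
  have hC : 0 < C := by nlinarith
  obtain ⟨S, hSint, hSae⟩ := hWconj C hC
  set ES : ℝ := ∫ x in D, S x with hES
  -- bound for g on D
  obtain ⟨ρ, hρ⟩ := hDb.subset_closedBall 0
  set B : ℝ := ‖g 0‖ + (Lg:ℝ) * ρ with hB
  have hgB : ∀ x ∈ D, ‖g x‖ ≤ B := by
    intro x hx
    have h1 : dist (g x) (g 0) ≤ (Lg:ℝ) * dist x 0 := hg.dist_le_mul x 0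
    have h2 : dist x 0 ≤ ρ := by
      have := hρ hx
      rwa [Metric.mem_closedBall] at this
    have h3 : ‖g x‖ ≤ ‖g 0‖ + dist (g x) (g 0) := by
      rw [dist_eq_norm]
      have := norm_sub_norm_le (g x) (g 0)
      linarith [norm_sub_norm_le (g x) (g 0), abs_norm_sub_norm_le (g x) (g 0)]
    have h4 : (Lg:ℝ) * dist x 0 ≤ (Lg:ℝ) * ρ :=
      mul_le_mul_of_nonneg_left h2 (NNReal.coe_nonneg Lg)
    rw [hB]; linarith
  have hgaeB : ∀ᵐ x ∂ν, ‖g x‖ ≤ B :=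
    (ae_restrict_iff' hDmeas).mpr (Filter.Eventually.of_forall hgB)
  have hgcont : Continuous g := hg.continuous
  have hgm : AEStronglyMeasurable g ν := hgcont.aestronglyMeasurable
  set Ng : ℝ≥0∞ := eLpNorm g (pexp d) ν with hNgdef
  have hNg_top : Ng ≠ ⊤ := by
    refine ne_of_lt (lt_of_le_of_lt (eLpNorm_le_of_ae_bound hgaeB) ?_)
    refine ENNReal.mul_lt_top ?_ ENNReal.ofReal_lt_top
    refine ENNReal.rpow_lt_top_of_nonneg (by positivity) ?_
    rw [hν, Measure.restrict_apply_univ]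
    exact hDb.measure_lt_top.ne
  set Ng' : ℝ := Ng.toReal with hNg'def
  have hNg'0 : 0 ≤ Ng' := ENNReal.toReal_nonneg
  set V : ℝ := (volume D).toReal with hVdef
  have hV0 : 0 ≤ V := ENNReal.toReal_nonneg
  -- facts about dg
  have hdgb : ∀ᵐ x ∂volume, ‖dg x‖ ≤ (Lg:ℝ) := by
    filter_upwards [hdg] with x hx using hx.le_of_lipschitz hg
  have hdgm : AEStronglyMeasurable dg (volume : Measure (EuclideanSpace ℝ (Fin d))) := by
    have h1 : ∀ᵐ x ∂(volume : Measure (EuclideanSpace ℝ (Fin d))), fderiv ℝ g x = dg x := by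
      filter_upwards [hdg] with x hx using hx.fderiv
    exact ((measurable_fderiv ℝ g).aestronglyMeasurable).congr h1
  have hdgint : Integrable dg ν := by
    refine Integrable.mono' (integrable_const (Lg:ℝ)) (hdgm.restrict) ?_
    exact ae_restrict_of_ae hdgb
  refine ⟨M * Ng' + M * K' * ((Lg:ℝ) * V) + (1/2)*|ES| + 1,
    fun f u du hf _hdu happ hu hduint hWint => ?_⟩
  have hcpos : (0:ℝ) ≤ M * Ng' + M * K' * ((Lg:ℝ) * V) + (1/2)*|ES| + 1 := by
    have h1 : 0 ≤ M * Ng' := mul_nonneg hM hNg'0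
    have h2 : 0 ≤ M * K' * ((Lg:ℝ) * V) :=
      mul_nonneg (mul_nonneg hM hK'0) (mul_nonneg (NNReal.coe_nonneg Lg) hV0)
    have h3 : 0 ≤ (1/2)*|ES| := by positivity
    linarith
  obtain ⟨φ, hφprop, htend⟩ := happ
  replace hu : Integrable u ν := hu
  replace hduint : Integrable du ν := hduint
  replace hWint : Integrable (fun x => W x (du x)) ν := hWint
  replace hSint : Integrable S ν := hSint
  -- superlinearity
  have hWS : ∀ᵐ x ∂ν, C * ‖du x‖ ≤ W x (du x) + S x := by
    filter_upwards [hSae] with x hx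
    exact superlin_pointwise hC hx (du x)
  set EW : ℝ := ∫ x in D, W x (du x) with hEW
  have hEW0 : 0 ≤ EW := integral_nonneg fun x => h0 _ _
  set Idu : ℝ := ∫ x in D, ‖du x‖ with hIdu
  have hIdu0 : 0 ≤ Idu := integral_nonneg fun x => norm_nonneg _
  have hCIdu : C * Idu ≤ EW + ES := by
    have h1 : ∫ x in D, C * ‖du x‖ ≤ ∫ x in D, (W x (du x) + S x) :=
      integral_mono_ae ((hduint.norm).const_mul C) (hWint.add hSint) hWS
    rw [integral_const_mul, integral_add hWint hSint] at h1
    rw [hIdu, hEW, hES]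
    exact h1
  -- integrability of approximants
  have hgD : Integrable g ν := Integrable.mono' (integrable_const B) hgm hgaeB
  have hφint : ∀ k, Integrable (φ k) (volume : Measure (EuclideanSpace ℝ (Fin d))) := fun k =>
    ((hφprop k).1.continuous).integrable_of_hasCompactSupport (hφprop k).2.1
  have hdφcont : ∀ k, Continuous (fderiv ℝ (φ k)) := fun k =>
    (hφprop k).1.continuous_fderiv one_ne_zero
  have hdφint : ∀ k, Integrable (fderiv ℝ (φ k)) (volume : Measure (EuclideanSpace ℝ (Fin d))) :=
    fun k => (hdφcont k).integrable_of_hasCompactSupport ((hφprop k).2.1.fderiv (𝕜 := ℝ))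
  have hAint : ∀ k, Integrable (fun x => ‖g x + φ k x - u x‖) ν := fun k =>
    ((hgD.add ((hφint k).restrict)).sub hu).norm
  have hBint : ∀ k, Integrable (fun x => ‖dg x + fderiv ℝ (φ k) x - du x‖) ν := fun k =>
    ((hdgint.add ((hdφint k).restrict)).sub hduint).norm
  set b : ℕ → ℝ := fun k => ∫ x in D, ‖g x + φ k x - u x‖ with hbdef
  set cc : ℕ → ℝ := fun k => ∫ x in D, ‖dg x + fderiv ℝ (φ k) x - du x‖ with hccdef
  have hb0 : ∀ k, 0 ≤ b k := fun k => integral_nonneg fun x => norm_nonneg _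
  have hcc0 : ∀ k, 0 ≤ cc k := fun k => integral_nonneg fun x => norm_nonneg _
  have hsum : ∀ k, (∫ x in D,
      (‖g x + φ k x - u x‖ + ‖dg x + fderiv ℝ (φ k) x - du x‖)) = b k + cc k := fun k =>
    integral_add (hAint k) (hBint k)
  have hbtend : Tendsto b atTop (𝓝 0) := by
    refine squeeze_zero hb0 (fun k => ?_) (by simpa [hsum] using htend)
    exact (le_add_of_nonneg_right (hcc0 k)).trans_eq (hsum k).symm
  have hcctend : Tendsto cc atTop (𝓝 0) := by
    refine squeeze_zero hcc0 (fun k => ?_) (by simpa [hsum] using htend)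
    exact (le_add_of_nonneg_left (hb0 k)).trans_eq (hsum k).symm
  -- L¹ convergence and a.e. subsequence
  have hugm : AEStronglyMeasurable (fun x => u x - g x) ν := hu.aestronglyMeasurable.sub hgm
  have hφm : ∀ k, AEStronglyMeasurable (φ k) ν := fun k =>
    ((hφprop k).1.continuous).aestronglyMeasurable
  have heL1 : Tendsto (fun k => eLpNorm (φ k - fun x => u x - g x) 1 ν) atTop (𝓝 0) := by
    have heq : ∀ k, eLpNorm (φ k - fun x => u x - g x) 1 ν = ENNReal.ofReal (b k) := by
      intro k
      have hfeq : (fun x => ‖(φ k - fun x => u x - g x) x‖)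
          = fun x => ‖g x + φ k x - u x‖ := by
        funext x
        simp only [Pi.sub_apply]
        congr 1
        abel
      have hint2 : Integrable (fun x => ‖(φ k - fun x => u x - g x) x‖) ν := by
        rw [hfeq]; exact hAint k
      have hor := MeasureTheory.ofReal_integral_eq_lintegral_ofReal hint2
        (Filter.Eventually.of_forall fun x => norm_nonneg _)
      rw [eLpNorm_one_eq_lintegral_enorm]
      calc ∫⁻ x, (‖(φ k - fun x => u x - g x) x‖₊ : ℝ≥0∞) ∂ν
          = ∫⁻ x, ENNReal.ofReal ‖(φ k - fun x => u x - g x) x‖ ∂ν :=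
            lintegral_congr fun x => (ofReal_norm _).symm
        _ = ENNReal.ofReal (∫ x, ‖(φ k - fun x => u x - g x) x‖ ∂ν) := hor.symm
        _ = ENNReal.ofReal (b k) := by
            congr 1
            rw [hfeq, hbdef]
    simp only [heq]
    have := ENNReal.tendsto_ofReal hbtend
    simpa using this
  have hmeasconv := tendstoInMeasure_of_tendsto_eLpNorm (p := 1) one_ne_zero hφm hugm heL1
  obtain ⟨ns, hns, haeconv⟩ := hmeasconv.exists_seq_tendsto_ae
  set X : ℝ≥0∞ := ENNReal.ofReal (∫ x in D, ‖du x - dg x‖) with hXdef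
  have hXtop : X ≠ ⊤ := ENNReal.ofReal_ne_top
  have hdusub : Integrable (fun x => du x - dg x) ν := hduint.sub hdgint
  have hφbound : ∀ k, eLpNorm (φ k) (pexp d) ν ≤ K * (X + ENNReal.ofReal (cc k)) := by
    intro k
    calc eLpNorm (φ k) (pexp d) ν ≤ eLpNorm (φ k) (pexp d) volume :=
          eLpNorm_mono_measure _ Measure.restrict_le_self
      _ ≤ K * ∫⁻ x, ‖fderiv ℝ (φ k) x‖₊ := hK _ (hφprop k).1 (hφprop k).2.1
      _ = K * ∫⁻ x in D, (‖fderiv ℝ (φ k) x‖₊ : ℝ≥0∞) := by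
          congr 1
          refine (setLIntegral_eq_of_support_subset ?_).symm
          intro x hx
          have hx' : fderiv ℝ (φ k) x ≠ 0 := by
            intro hcon
            apply hx
            simp [hcon]
          have hx2 : x ∈ Function.support (fderiv ℝ (φ k)) := hx'
          exact (hφprop k).2.2 (support_fderiv_subset ℝ hx2)
      _ ≤ K * (∫⁻ x in D, ((‖du x - dg x‖₊ : ℝ≥0∞)
            + (‖dg x + fderiv ℝ (φ k) x - du x‖₊ : ℝ≥0∞))) := by
          gcongr with x
          have heqv : fderiv ℝ (φ k) x
              = (du x - dg x) + (dg x + fderiv ℝ (φ k) x - du x) := by abel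
          calc (‖fderiv ℝ (φ k) x‖₊ : ℝ≥0∞)
              = (‖(du x - dg x) + (dg x + fderiv ℝ (φ k) x - du x)‖₊ : ℝ≥0∞) := by
                rw [← heqv]
            _ ≤ (‖du x - dg x‖₊ : ℝ≥0∞) + (‖dg x + fderiv ℝ (φ k) x - du x‖₊ : ℝ≥0∞) := by
                exact_mod_cast nnnorm_add_le _ _
      _ = K * (X + ENNReal.ofReal (cc k)) := by
          congr 1
          rw [lintegral_add_left' (f := fun x => (‖du x - dg x‖₊ : ℝ≥0∞)) (hdusub.aestronglyMeasurable.enorm)]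
          congr 1
          · rw [hXdef, MeasureTheory.ofReal_integral_eq_lintegral_ofReal hdusub.norm
              (Filter.Eventually.of_forall fun x => norm_nonneg _)]
            exact (lintegral_congr fun x => (ofReal_norm _)).symm
          · rw [hccdef, MeasureTheory.ofReal_integral_eq_lintegral_ofReal (hBint k)
              (Filter.Eventually.of_forall fun x => norm_nonneg _)]
            exact (lintegral_congr fun x => (ofReal_norm _)).symm
  have hφlim : eLpNorm (fun x => u x - g x) (pexp d) ν ≤ K * X := by
    refine (Lp.eLpNorm_lim_le_liminf_eLpNorm (fun j => hφm (ns j)) _ haeconv).trans ?_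
    have h2 : Tendsto (fun j => K * (X + ENNReal.ofReal (cc (ns j)))) atTop
        (𝓝 (K * (X + 0))) := by
      refine ENNReal.Tendsto.const_mul ?_ (Or.inr hKtop)
      refine Filter.Tendsto.const_add X ?_
      have h3 : Tendsto (fun j => cc (ns j)) atTop (𝓝 0) :=
        hcctend.comp hns.tendsto_atTop
      have := ENNReal.tendsto_ofReal h3
      simpa using this
    calc Filter.atTop.liminf (fun j => eLpNorm (φ (ns j)) (pexp d) ν)
        ≤ Filter.atTop.liminf (fun j => K * (X + ENNReal.ofReal (cc (ns j)))) :=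
          Filter.liminf_le_liminf (Filter.Eventually.of_forall fun j => hφbound (ns j))
      _ = K * (X + 0) := h2.liminf_eq
      _ = K * X := by rw [add_zero]
  have huele : eLpNorm u (pexp d) ν ≤ Ng + K * X := by
    have hueq : u = fun x => g x + (u x - g x) := by funext x; abel
    calc eLpNorm u (pexp d) ν = eLpNorm (fun x => g x + (u x - g x)) (pexp d) ν :=
          congrArg (fun w => eLpNorm w (pexp d) ν) hueq
      _ ≤ eLpNorm g (pexp d) ν + eLpNorm (fun x => u x - g x) (pexp d) ν := by
          have := eLpNorm_add_le hgm hugm (pexp_one_le hd)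
          exact this
      _ ≤ Ng + K * X := by
          rw [hNgdef]
          exact add_le_add le_rfl hφlim
  set Bnd : ℝ≥0∞ := ENNReal.ofReal M * (Ng + K * X) with hBnd
  have hBndtop : Bnd ≠ ⊤ :=
    ENNReal.mul_ne_top ENNReal.ofReal_ne_top
      (ENNReal.add_ne_top.mpr ⟨hNg_top, ENNReal.mul_ne_top hKtop hXtop⟩)
  have hXval : X.toReal = ∫ x in D, ‖du x - dg x‖ :=
    ENNReal.toReal_ofReal (integral_nonneg fun x => norm_nonneg _)
  have hXle : X.toReal ≤ Idu + (Lg:ℝ) * V := by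
    rw [hXval]
    have h1 : ∫ x in D, ‖du x - dg x‖ ≤ ∫ x in D, (‖du x‖ + (Lg:ℝ)) := by
      refine integral_mono_ae hdusub.norm ((hduint.norm).add (integrable_const _)) ?_
      filter_upwards [ae_restrict_of_ae hdgb] with x hx
      exact (norm_sub_le _ _).trans (by linarith)
    rw [integral_add hduint.norm (integrable_const _), integral_const] at h1
    have h2 : (ν Set.univ).toReal = V := by
      rw [hν, Measure.restrict_apply_univ, hVdef]
    rw [smul_eq_mul, measureReal_def, h2] at h1
    have h3 : (∫ x in D, ‖du x‖) = Idu := by rw [hIdu]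
    calc ∫ x in D, ‖du x - dg x‖ ≤ (∫ x in D, ‖du x‖) + V * (Lg:ℝ) := h1
      _ = Idu + (Lg:ℝ) * V := by rw [h3]; ring
  -- key estimate
  have hkey : ∀ h : EuclideanSpace ℝ (Fin d) → ℝ, AEStronglyMeasurable h ν →
      (∀ x, 0 ≤ h x) → (∀ x, h x ≤ ‖f x‖ * ‖u x‖) →
      Integrable h ν ∧ (∫ x in D, h x) ≤ (1/2)*EW
        + (M * Ng' + M * K' * ((Lg:ℝ) * V) + (1/2)*|ES|) := by
    intro h hm hnn hle
    have h1 : ∫⁻ x, ENNReal.ofReal (h x) ∂ν ≤ Bnd := by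
      refine (pairing_bound d hd ν f u hu.aestronglyMeasurable h hm hnn hle).trans ?_
      rw [hBnd]
      exact mul_le_mul' hf huele
    have hint : Integrable h ν := by
      refine ⟨hm, ?_⟩
      rw [hasFiniteIntegral_iff_norm]
      have heq2 : ∫⁻ x, ENNReal.ofReal ‖h x‖ ∂ν = ∫⁻ x, ENNReal.ofReal (h x) ∂ν :=
        lintegral_congr fun x => by rw [Real.norm_eq_abs, abs_of_nonneg (hnn x)]
      rw [heq2]
      exact lt_of_le_of_lt h1 (lt_of_le_of_ne le_top hBndtop)
    have h2 : ∫ x in D, h x = (∫⁻ x, ENNReal.ofReal (h x) ∂ν).toReal :=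
      integral_eq_lintegral_of_nonneg_ae (Filter.Eventually.of_forall hnn) hm
    have h3 : ∫ x in D, h x ≤ Bnd.toReal := by
      rw [h2]; exact ENNReal.toReal_mono hBndtop h1
    refine ⟨hint, h3.trans ?_⟩
    have hBval : Bnd.toReal = M * (Ng' + K' * X.toReal) := by
      rw [hBnd, ENNReal.toReal_mul, ENNReal.toReal_ofReal hM,
        ENNReal.toReal_add hNg_top (ENNReal.mul_ne_top hKtop hXtop), ENNReal.toReal_mul]
    rw [hBval]
    have hIduB : Idu ≤ (EW + ES)/C := by
      rw [le_div_iff₀ hC]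
      nlinarith [hCIdu]
    have hfrac : M*K'/C ≤ 1/2 := by
      rw [div_le_iff₀ hC]
      nlinarith
    have step1 : M * (Ng' + K' * X.toReal) ≤ M * (Ng' + K' * (Idu + (Lg:ℝ)*V)) := by
      have : K' * X.toReal ≤ K' * (Idu + (Lg:ℝ)*V) := mul_le_mul_of_nonneg_left hXle hK'0
      nlinarith
    have step2 : M * (Ng' + K' * (Idu + (Lg:ℝ)*V))
        = M*Ng' + M*K'*((Lg:ℝ)*V) + M*K'*Idu := by ring
    have step3 : M*K'*Idu ≤ (1/2)*(EW + |ES|) := by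
      have h5 : M*K'*Idu ≤ M*K'*((EW+ES)/C) :=
        mul_le_mul_of_nonneg_left hIduB (mul_nonneg hM hK'0)
      have h6 : M*K'*((EW+ES)/C) = (M*K'/C)*(EW+ES) := by ring
      have h7 : EW + ES ≤ EW + |ES| := by linarith [le_abs_self ES]
      have h8 : (0:ℝ) ≤ EW + |ES| := by positivity
      have h9 : (0:ℝ) ≤ M*K'/C := by positivity
      have h10 : (M*K'/C)*(EW+ES) ≤ (M*K'/C)*(EW+|ES|) := mul_le_mul_of_nonneg_left h7 h9
      have h11 : (M*K'/C)*(EW+|ES|) ≤ (1/2)*(EW+|ES|) := mul_le_mul_of_nonneg_right hfrac h8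
      linarith
    linarith
  constructor
  · by_cases hPm : AEStronglyMeasurable (fun x => ‖f x‖ * ‖u x‖) ν
    · obtain ⟨_, hP⟩ := hkey _ hPm
        (fun x => mul_nonneg (norm_nonneg _) (norm_nonneg _)) (fun x => le_rfl)
      have hP' : (∫ x, ‖f x‖ * ‖u x‖ ∂ν) ≤ (1/2)*EW
          + (M * Ng' + M * K' * ((Lg:ℝ) * V) + (1/2)*|ES|) := hP
      rw [ge_iff_le]
      linarith
    · have hnint : ¬ Integrable (fun x => ‖f x‖ * ‖u x‖) ν := fun hcon =>
        hPm hcon.aestronglyMeasurable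
      have hz : (∫ x, ‖f x‖ * ‖u x‖ ∂ν) = 0 := integral_undef hnint
      rw [ge_iff_le]
      linarith [hz]
  · by_cases hQm : AEStronglyMeasurable (fun x => (inner ℝ (f x) (u x) : ℝ)) ν
    · obtain ⟨hQint, hQ⟩ := hkey (fun x => |(inner ℝ (f x) (u x) : ℝ)|) hQm.norm
        (fun x => abs_nonneg _) (fun x => abs_real_inner_le_norm _ _)
      have hQint2 : Integrable (fun x => (inner ℝ (f x) (u x) : ℝ)) ν := by
        refine hQint.mono hQm ?_
        filter_upwards with x
        rw [Real.norm_eq_abs, Real.norm_eq_abs, abs_abs]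
      have h12 : ∫ x in D, (inner ℝ (f x) (u x) : ℝ)
          ≤ ∫ x in D, |(inner ℝ (f x) (u x) : ℝ)| := by
        refine integral_mono hQint2 hQint fun x => le_abs_self _
      have hQ' : (∫ x, |(inner ℝ (f x) (u x) : ℝ)| ∂ν) ≤ (1/2)*EW
          + (M * Ng' + M * K' * ((Lg:ℝ) * V) + (1/2)*|ES|) := hQ
      have h12' : (∫ x, (inner ℝ (f x) (u x) : ℝ) ∂ν)
          ≤ ∫ x, |(inner ℝ (f x) (u x) : ℝ)| ∂ν := h12
      rw [ge_iff_le]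
      linarith
    · have hnint : ¬ Integrable (fun x => (inner ℝ (f x) (u x) : ℝ)) ν := fun hcon =>
        hQm hcon.aestronglyMeasurable
      have hz : (∫ x, (inner ℝ (f x) (u x) : ℝ) ∂ν) = 0 := integral_undef hnint
      rw [ge_iff_le]
      linarith [hz]

end
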